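/- Let p ∈ (1,∞), C ∈ (0,∞), and N ≥ 1 an integer. Let T: ℂ^N → [0,∞) be a function satisfying T(a+b) ≤ T(a) + T(b) for all a, b ∈ ℂ^N and T(λ·a) = |λ|·T(a) for all λ ∈ ℂ and a ∈ ℂ^N. Suppose that T(1_S) ≤ C·‖1_S‖_{ℓ^p} holds for every subset S ⊆ {1,...,N}, where 1_S denotes the indicator vector of S. Then for every a ∈ ℂ^N, T(a) ≤ 2^{1/p}·4^{1/p'}·C·(1 + p^{-1}(log N)^{1/p'})·‖a‖_{ℓ^p}. -/

import Mathlib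

open Finset MeasureTheory

lemma key_calc {p p' : ℝ} (hp : 1 < p) (hpp' : 1/p + 1/p' = 1) {y : ℝ} (hy : 1 ≤ y) :
    (y+1) ^ (1/p) - y ^ (1/p) ≤ p⁻¹ * (Real.log (y+1) - Real.log y) ^ (1/p') := by
  have hp0 : (0:ℝ) < p := lt_trans one_pos hp
  have hip : 0 < 1/p := by positivity
  have hip1 : 1/p < 1 := by rw [div_lt_one hp0]; exact hp
  have hip' : 1/p' = 1 - 1/p := by linarith
  have hip'0 : 0 < 1/p' := by rw [hip']; linarith
  have hip'1 : 1/p' ≤ 1 := by rw [hip']; linarith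
  have hy0 : (0:ℝ) < y := lt_of_lt_of_le one_pos hy
  have hy10 : (0:ℝ) < y + 1 := by linarith
  have hle : y ≤ y + 1 := by linarith
  -- step 1 : FTC
  have h1 : ∫ t in y..(y+1), t ^ (1/p - 1) = ((y+1) ^ (1/p) - y ^ (1/p)) * p := by
    rw [integral_rpow (Or.inl (by linarith))]
    have h : 1/p - 1 + 1 = 1/p := by ring
    rw [h, div_div_eq_mul_div, div_one]
  -- step 2 : rewrite integrand
  have h2 : ∫ t in y..(y+1), t ^ (1/p - 1) = ∫ t in y..(y+1), (t⁻¹) ^ (1/p') := by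
    apply intervalIntegral.integral_congr
    intro t ht
    rw [Set.uIcc_of_le hle] at ht
    have ht0 : 0 < t := lt_of_lt_of_le hy0 ht.1
    show t ^ (1/p - 1) = t⁻¹ ^ (1/p')
    rw [← Real.rpow_neg_one t, ← Real.rpow_mul ht0.le]
    congr 1
    rw [hip']
    ring
  -- step 3 : Jensen
  set μ : Measure ℝ := volume.restrict (Set.Ioc y (y+1)) with hμ
  haveI : IsProbabilityMeasure μ := by
    constructor
    rw [hμ, Measure.restrict_apply_univ, Real.volume_Ioc]
    norm_num
  have hconc : ConcaveOn ℝ (Set.Ici 0) (fun z : ℝ => z ^ (1/p')) :=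
    Real.concaveOn_rpow hip'0.le hip'1
  have hgc : ContinuousOn (fun z : ℝ => z ^ (1/p')) (Set.Ici 0) := fun z _ =>
    (Real.continuousAt_rpow_const z (1/p') (Or.inr hip'0.le)).continuousWithinAt
  have hfs : ∀ᵐ t ∂μ, t⁻¹ ∈ Set.Ici (0:ℝ) := by
    refine (ae_restrict_mem measurableSet_Ioc).mono (fun t ht => ?_)
    exact Set.mem_Ici.2 (inv_nonneg.2 (le_of_lt (lt_of_lt_of_le hy0 ht.1.le)))
  have hcont1 : ContinuousOn (fun t : ℝ => t⁻¹) (Set.Icc y (y+1)) := by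
    apply ContinuousOn.inv₀ continuousOn_id
    intro t ht
    exact ne_of_gt (lt_of_lt_of_le hy0 ht.1)
  have hfi : Integrable (fun t : ℝ => t⁻¹) μ :=
    (hcont1.integrableOn_Icc).mono_set Set.Ioc_subset_Icc_self
  have hgi : Integrable ((fun z : ℝ => z ^ (1/p')) ∘ (fun t : ℝ => t⁻¹)) μ := by
    apply IntegrableOn.mono_set _ (Set.Ioc_subset_Icc_self)
    exact (hcont1.rpow_const (fun t ht => Or.inr hip'0.le)).integrableOn_Icc
  have hJ : (∫ t, (t⁻¹) ^ (1/p') ∂μ) ≤ (∫ t, t⁻¹ ∂μ) ^ (1/p') :=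
    hconc.le_map_integral hgc isClosed_Ici hfs hfi hgi
  have hlog : (∫ t, t⁻¹ ∂μ) = Real.log (y+1) - Real.log y := by
    have := intervalIntegral.integral_of_le (f := fun t : ℝ => t⁻¹) (μ := volume) hle
    rw [hμ, ← this, integral_inv (by
      rw [Set.uIcc_of_le hle]
      exact fun h => absurd h.1 (not_le.2 hy0)), Real.log_div (ne_of_gt hy10) (ne_of_gt hy0)]
  have hIoc : (∫ t in y..(y+1), (t⁻¹) ^ (1/p')) = ∫ t, (t⁻¹) ^ (1/p') ∂μ := by
    rw [intervalIntegral.integral_of_le hle, hμ]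
  calc (y+1) ^ (1/p) - y ^ (1/p) ≤ (Real.log (y+1) - Real.log y) ^ (1/p') / p := by
        rw [le_div_iff₀ hp0]; rw [← h1, h2, hIoc, ← hlog]; exact hJ
    _ = p⁻¹ * (Real.log (y+1) - Real.log y) ^ (1/p') := by ring

lemma T_zero {N : ℕ} (T : (Fin N → ℂ) → ℝ)
    (hThom : ∀ (l : ℂ) (a : Fin N → ℂ), T (l • a) = ‖l‖ * T a) : T 0 = 0 := by
  have := hThom 0 0
  simpa using this

lemma T_sum_le {N : ℕ} (T : (Fin N → ℂ) → ℝ)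
    (hTsub : ∀ a b, T (a + b) ≤ T a + T b)
    (hThom : ∀ (l : ℂ) (a : Fin N → ℂ), T (l • a) = ‖l‖ * T a)
    {ι : Type*} (s : Finset ι) (f : ι → (Fin N → ℂ)) :
    T (∑ k ∈ s, f k) ≤ ∑ k ∈ s, T (f k) := by
  classical
  induction s using Finset.induction with
  | empty => simp [T_zero T hThom]
  | insert _ _ hx ih =>
    rename_i x s
    rw [Finset.sum_insert hx, Finset.sum_insert hx]
    exact le_trans (hTsub _ _) (by linarith)

lemma nonneg_case (p p' C : ℝ) (hp : 1 < p) (hpp' : 1 / p + 1 / p' = 1)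
    (hC : 0 < C) (N : ℕ) (hN : 1 ≤ N) (T : (Fin N → ℂ) → ℝ)
    (hTnn : ∀ a, 0 ≤ T a)
    (hTsub : ∀ a b, T (a + b) ≤ T a + T b)
    (hThom : ∀ (l : ℂ) (a : Fin N → ℂ), T (l • a) = ‖l‖ * T a)
    (hTres : ∀ S : Finset (Fin N),
      T (fun j => if j ∈ S then 1 else 0) ≤
        C * (∑ j, ‖(if j ∈ S then (1 : ℂ) else 0)‖ ^ p) ^ (1 / p))
    (b : Fin N → ℝ) (hb : ∀ j, 0 ≤ b j) :
    T (fun j => (b j : ℂ)) ≤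
      C * (1 + p⁻¹ * (Real.log N) ^ (1 / p')) * (∑ j, (b j) ^ p) ^ (1 / p) := by
  classical
  obtain ⟨M, hNM⟩ : ∃ M, N = M + 1 := ⟨N - 1, (Nat.succ_pred_eq_of_pos hN).symm⟩
  have hp0 : (0:ℝ) < p := lt_trans one_pos hp
  have hip : 0 < 1/p := by positivity
  have hip1 : 1/p < 1 := by rw [div_lt_one hp0]; exact hp
  have hip' : 1/p' = 1 - 1/p := by linarith
  have hip'0 : 0 < 1/p' := by rw [hip']; linarith
  have hp'0 : 0 < p' := by
    rcases lt_trichotomy p' 0 with h | h | h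
    · exact absurd (div_neg_of_pos_of_neg one_pos h) (by linarith)
    · rw [h] at hip'0; simp at hip'0
    · exact h
  set Bp : ℝ := (∑ j, (b j) ^ p) ^ (1 / p) with hBp
  have hsum_nn : 0 ≤ ∑ j, (b j) ^ p :=
    Finset.sum_nonneg (fun j _ => Real.rpow_nonneg (hb j) p)
  have hBp0 : 0 ≤ Bp := Real.rpow_nonneg hsum_nn _
  have hble : ∀ j, b j ≤ Bp := by
    intro j
    have h1 : (b j) ^ p ≤ ∑ j, (b j) ^ p :=
      Finset.single_le_sum (fun j _ => Real.rpow_nonneg (hb j) p) (Finset.mem_univ j)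
    have h2 : ((b j) ^ p) ^ (1/p) ≤ Bp :=
      Real.rpow_le_rpow (Real.rpow_nonneg (hb j) p) h1 hip.le
    rwa [← Real.rpow_mul (hb j), mul_one_div_cancel (ne_of_gt hp0), Real.rpow_one] at h2
  -- sorting
  set σ : Equiv.Perm (Fin N) := Tuple.sort (fun j => -b j) with hσ
  have hmono : Monotone ((fun j => -b j) ∘ σ) := Tuple.monotone_sort _
  set c : ℕ → ℝ := fun i => if h : i < N then b (σ ⟨i, h⟩) else 0 with hc
  have hc0 : ∀ i, 0 ≤ c i := by
    intro i; simp only [hc]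
    split
    · exact hb _
    · exact le_refl 0
  have hcle : ∀ i, c i ≤ Bp := by
    intro i; simp only [hc]
    split
    · exact hble _
    · exact hBp0
  have hcN : c N = 0 := by simp [hc]
  have hanti : ∀ k l : ℕ, k ≤ l → c l ≤ c k := by
    intro k l hkl
    simp only [hc]
    split
    · rename_i hl
      have hk : k < N := lt_of_le_of_lt hkl hl
      rw [dif_pos hk]
      have := hmono (a := (⟨k, hk⟩ : Fin N)) (b := (⟨l, hl⟩ : Fin N)) hkl
      simpa using this
    · split
      · exact hb _
      · exact le_refl 0
  -- level sets
  set S : ℕ → Finset (Fin N) := fun m =>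
    Finset.image (fun i => σ i) (Finset.univ.filter (fun i : Fin N => (i : ℕ) < m)) with hS
  have hSmem : ∀ (m : ℕ) (j : Fin N), j ∈ S m ↔ ((σ.symm j : Fin N) : ℕ) < m := by
    intro m j
    simp only [hS, Finset.mem_image, Finset.mem_filter, Finset.mem_univ, true_and]
    constructor
    · rintro ⟨i, hi, rfl⟩; simpa using hi
    · intro h; exact ⟨σ.symm j, h, by simp⟩
  have hScard : ∀ m : ℕ, m ≤ N → (S m).card = m := by
    intro m hm
    rw [hS]
    rw [Finset.card_image_of_injective _ σ.injective]
    have he : (Finset.univ.filter (fun i : Fin N => (i : ℕ) < m)) =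
        (Finset.range m).attachFin (fun x hx => lt_of_lt_of_le (Finset.mem_range.1 hx) hm) := by
      ext i; simp [Finset.mem_attachFin]
    rw [he, Finset.card_attachFin, Finset.card_range]
  -- decomposition
  have hdecomp : (fun j => (b j : ℂ)) =
      ∑ k ∈ Finset.range N, ((c k - c (k+1) : ℝ) : ℂ) •
        (fun j => if j ∈ S (k+1) then (1:ℂ) else 0) := by
    funext j
    rw [Finset.sum_apply]
    set r : ℕ := ((σ.symm j : Fin N) : ℕ) with hr
    have hrN : r < N := (σ.symm j).2
    have hcr : c r = b j := by
      simp only [hc]; rw [dif_pos hrN]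
      congr 1
      simp only [hr]
      rw [Fin.eta]
      exact σ.apply_symm_apply j
    have hterm : ∀ k ∈ Finset.range N, (((c k - c (k+1) : ℝ) : ℂ) •
        (fun j => if j ∈ S (k+1) then (1:ℂ) else 0)) j
        = if r ≤ k then ((c k - c (k+1) : ℝ) : ℂ) else 0 := by
      intro k _
      simp only [Pi.smul_apply, smul_eq_mul, hSmem (k+1) j, ← hr, Nat.lt_succ_iff]
      split <;> simp
    rw [Finset.sum_congr rfl hterm, ← Finset.sum_filter, Finset.range_eq_Ico,
      Finset.Ico_filter_le_of_left_le (Nat.zero_le r)]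
    have htel : ∑ k ∈ Finset.Ico r N, (c k - c (k+1)) = c r := by
      rw [Finset.sum_Ico_eq_sum_range]
      have h0 := Finset.sum_range_sub' (fun i => c (r + i)) (N - r)
      simp only [Nat.add_assoc] at h0 ⊢
      rw [h0, Nat.add_sub_cancel' hrN.le, hcN, sub_zero, Nat.add_zero]
    calc (b j : ℂ) = ((∑ k ∈ Finset.Ico r N, (c k - c (k+1)) : ℝ) : ℂ) := by
          rw [htel, hcr]
      _ = ∑ k ∈ Finset.Ico r N, ((c k - c (k+1) : ℝ) : ℂ) := by push_cast; ring
  -- bound on indicators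
  have hTresS : ∀ k ∈ Finset.range N, T (fun j => if j ∈ S (k+1) then (1:ℂ) else 0)
      ≤ C * ((k:ℝ)+1) ^ (1/p) := by
    intro k hk
    refine le_trans (hTres (S (k+1))) ?_
    have hsum : (∑ j, ‖(if j ∈ S (k+1) then (1 : ℂ) else 0)‖ ^ p) = ((S (k+1)).card : ℝ) := by
      have h1 : ∀ j : Fin N, ‖(if j ∈ S (k+1) then (1:ℂ) else 0)‖ ^ p
          = if j ∈ S (k+1) then (1:ℝ) else 0 := by
        intro j; split <;> simp [Real.zero_rpow (ne_of_gt hp0)]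
      rw [Finset.sum_congr rfl (fun j _ => h1 j), Finset.sum_ite_mem, Finset.univ_inter,
        Finset.sum_const, nsmul_eq_mul, mul_one]
    rw [hsum, hScard (k+1) (Finset.mem_range.1 hk)]
    push_cast
    exact le_refl _
  -- main chain
  have step1 : T (fun j => (b j : ℂ)) ≤
      ∑ k ∈ Finset.range N, (c k - c (k+1)) * (C * ((k:ℝ)+1) ^ (1/p)) := by
    rw [hdecomp]
    refine le_trans (T_sum_le T hTsub hThom _ _) (Finset.sum_le_sum ?_)
    intro k hk
    rw [hThom]
    have hdk : 0 ≤ c k - c (k+1) := sub_nonneg.2 (hanti k (k+1) (Nat.le_succ k))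
    have hnorm : ‖((c k - c (k+1) : ℝ) : ℂ)‖ = c k - c (k+1) := by
      rw [Complex.norm_real, Real.norm_eq_abs, abs_of_nonneg hdk]
    rw [hnorm]
    exact mul_le_mul_of_nonneg_left (hTresS k hk) hdk
  have step2 : ∑ k ∈ Finset.range N, (c k - c (k+1)) * (C * ((k:ℝ)+1) ^ (1/p))
      = C * ∑ k ∈ Finset.range N, (c k - c (k+1)) * ((k:ℝ)+1) ^ (1/p) := by
    rw [Finset.mul_sum]; exact Finset.sum_congr rfl (fun k _ => by ring)
  have habel : ∑ k ∈ Finset.range N, (c k - c (k+1)) * ((k:ℝ)+1) ^ (1/p)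
      = ∑ k ∈ Finset.range N, c k * (((k:ℝ)+1) ^ (1/p) - (k:ℝ) ^ (1/p)) := by
    have h0 := Finset.sum_range_succ' (fun k => c k * (k:ℝ) ^ (1/p)) N
    have h2 := Finset.sum_range_succ (fun k => c k * (k:ℝ) ^ (1/p)) N
    simp only [Nat.cast_zero, Real.zero_rpow (ne_of_gt hip), mul_zero, add_zero, hcN,
      zero_mul] at h0 h2
    push_cast at h0
    have h1 : ∑ k ∈ Finset.range N, c (k+1) * ((k:ℝ)+1) ^ (1/p)
        = ∑ k ∈ Finset.range N, c k * (k:ℝ) ^ (1/p) := by rw [← h0]; exact h2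
    simp only [sub_mul, mul_sub, Finset.sum_sub_distrib, h1]
  -- the tail estimate
  have hlogN0 : 0 ≤ Real.log (N:ℝ) := Real.log_nonneg (by exact_mod_cast hN)
  have hlogrp0 : 0 ≤ (Real.log (N:ℝ)) ^ (1/p') := Real.rpow_nonneg hlogN0 _
  have hlognn : ∀ i : ℕ, 0 ≤ Real.log ((i:ℝ)+1+1) - Real.log ((i:ℝ)+1) := by
    intro i
    have : Real.log ((i:ℝ)+1) ≤ Real.log ((i:ℝ)+1+1) :=
      Real.log_le_log (by positivity) (by linarith)
    linarith
  have hsplit : ∑ k ∈ Finset.range N, c k * (((k:ℝ)+1) ^ (1/p) - (k:ℝ) ^ (1/p))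
      ≤ Bp + p⁻¹ * (Real.log (N:ℝ)) ^ (1/p') * Bp := by
    conv_lhs => rw [hNM]
    rw [Finset.sum_range_succ' (fun k => c k * (((k:ℝ)+1) ^ (1/p) - (k:ℝ) ^ (1/p))) M]
    have hzero : c 0 * ((((0:ℕ):ℝ)+1) ^ (1/p) - ((0:ℕ):ℝ) ^ (1/p)) = c 0 := by
      have h00 : ((0:ℕ):ℝ) = 0 := by norm_num
      rw [h00, Real.zero_rpow (ne_of_gt hip), zero_add, Real.one_rpow, sub_zero, mul_one]
    have hkey : ∀ i ∈ Finset.range M,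
        c (i+1) * ((((i+1:ℕ):ℝ)+1) ^ (1/p) - ((i+1:ℕ):ℝ) ^ (1/p))
        ≤ c (i+1) * (p⁻¹ * (Real.log ((i:ℝ)+1+1) - Real.log ((i:ℝ)+1)) ^ (1/p')) := by
      intro i _
      refine mul_le_mul_of_nonneg_left ?_ (hc0 (i+1))
      have hy1 : (1:ℝ) ≤ (i:ℝ)+1 := by
        have : (0:ℝ) ≤ (i:ℝ) := Nat.cast_nonneg i
        linarith
      have hk := key_calc hp hpp' hy1
      push_cast
      exact hk
    have hhold : ∑ i ∈ Finset.range M,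
        c (i+1) * (Real.log ((i:ℝ)+1+1) - Real.log ((i:ℝ)+1)) ^ (1/p')
        ≤ (∑ i ∈ Finset.range M, c (i+1) ^ p) ^ (1/p) *
          (∑ i ∈ Finset.range M, (Real.log ((i:ℝ)+1+1) - Real.log ((i:ℝ)+1))) ^ (1/p') := by
      have H := Real.inner_le_Lp_mul_Lq_of_nonneg (p := p) (q := p') (Finset.range M)
        (f := fun i => c (i+1))
        (g := fun i => (Real.log ((i:ℝ)+1+1) - Real.log ((i:ℝ)+1)) ^ (1/p'))
        ⟨by rw [inv_one, inv_eq_one_div, inv_eq_one_div]; exact hpp', hp0, one_div_pos.mp hip'0⟩ (fun i _ => hc0 _) (fun i _ => Real.rpow_nonneg (hlognn i) _)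
      beta_reduce at H
      refine le_trans H ?_
      have he : ∑ i ∈ Finset.range M,
          ((Real.log ((i:ℝ)+1+1) - Real.log ((i:ℝ)+1)) ^ (1/p')) ^ p'
          = ∑ i ∈ Finset.range M, (Real.log ((i:ℝ)+1+1) - Real.log ((i:ℝ)+1)) := by
        refine Finset.sum_congr rfl (fun i _ => ?_)
        rw [← Real.rpow_mul (hlognn i), one_div, inv_mul_cancel₀ (ne_of_gt hp'0),
          Real.rpow_one]
      rw [he]
    have hlogsum : ∑ i ∈ Finset.range M, (Real.log ((i:ℝ)+1+1) - Real.log ((i:ℝ)+1))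
        = Real.log (N:ℝ) := by
      have h3 := Finset.sum_range_sub (fun i => Real.log ((i:ℝ)+1)) M
      push_cast at h3
      simp only [Real.log_one, sub_zero, Nat.cast_zero, zero_add] at h3
      rw [h3, hNM]
      push_cast
      ring_nf
    have hpart : (∑ i ∈ Finset.range M, c (i+1) ^ p) ^ (1/p) ≤ Bp := by
      refine Real.rpow_le_rpow
        (Finset.sum_nonneg (fun i _ => Real.rpow_nonneg (hc0 _) _)) ?_ hip.le
      have h1 : ∑ i ∈ Finset.range M, c (i+1) ^ p ≤ ∑ i ∈ Finset.range N, c i ^ p := by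
        rw [hNM, Finset.sum_range_succ' (fun i => c i ^ p) M]
        have h0p : 0 ≤ c 0 ^ p := Real.rpow_nonneg (hc0 0) p
        linarith
      have h2 : ∑ i ∈ Finset.range N, c i ^ p = ∑ j, b j ^ p := by
        rw [← Fin.sum_univ_eq_sum_range (fun i => c i ^ p) N]
        rw [← Equiv.sum_comp σ (fun j => b j ^ p)]
        refine Finset.sum_congr rfl (fun i _ => ?_)
        congr 1
        simp only [hc]
        rw [dif_pos i.2, Fin.eta]
      rw [← h2]
      exact h1
    have hfin : ∑ i ∈ Finset.range M,
        c (i+1) * ((((i+1:ℕ):ℝ)+1) ^ (1/p) - ((i+1:ℕ):ℝ) ^ (1/p))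
        ≤ p⁻¹ * (Real.log (N:ℝ)) ^ (1/p') * Bp := by
      refine le_trans (Finset.sum_le_sum hkey) ?_
      have e1 : ∑ i ∈ Finset.range M,
          c (i+1) * (p⁻¹ * (Real.log ((i:ℝ)+1+1) - Real.log ((i:ℝ)+1)) ^ (1/p'))
          = p⁻¹ * ∑ i ∈ Finset.range M,
            c (i+1) * (Real.log ((i:ℝ)+1+1) - Real.log ((i:ℝ)+1)) ^ (1/p') := by
        rw [Finset.mul_sum]; exact Finset.sum_congr rfl (fun i _ => by ring)
      rw [e1]
      have hp_inv : (0:ℝ) ≤ p⁻¹ := by positivity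
      refine le_trans (mul_le_mul_of_nonneg_left hhold hp_inv) ?_
      rw [hlogsum]
      have := mul_le_mul_of_nonneg_right hpart hlogrp0
      calc p⁻¹ * ((∑ i ∈ Finset.range M, c (i+1) ^ p) ^ (1/p) * (Real.log (N:ℝ)) ^ (1/p'))
          ≤ p⁻¹ * (Bp * (Real.log (N:ℝ)) ^ (1/p')) :=
            mul_le_mul_of_nonneg_left this hp_inv
        _ = p⁻¹ * (Real.log (N:ℝ)) ^ (1/p') * Bp := by ring
    have hlast : c 0 * ((((0:ℕ):ℝ)+1) ^ (1/p) - ((0:ℕ):ℝ) ^ (1/p)) ≤ Bp := by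
      rw [hzero]; exact hcle 0
    calc (∑ i ∈ Finset.range M, (fun k => c k * (((k:ℝ)+1) ^ (1/p) - (k:ℝ) ^ (1/p))) (i+1))
          + (fun k => c k * (((k:ℝ)+1) ^ (1/p) - (k:ℝ) ^ (1/p))) 0
        ≤ p⁻¹ * (Real.log (N:ℝ)) ^ (1/p') * Bp + Bp := by
          refine add_le_add ?_ ?_
          · refine le_trans (le_of_eq (Finset.sum_congr rfl (fun i _ => ?_))) hfin
            push_cast
            ring_nf
          · exact hlast
      _ = Bp + p⁻¹ * (Real.log (N:ℝ)) ^ (1/p') * Bp := by ring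
  -- put everything together
  calc T (fun j => (b j : ℂ))
      ≤ ∑ k ∈ Finset.range N, (c k - c (k+1)) * (C * ((k:ℝ)+1) ^ (1/p)) := step1
    _ = C * ∑ k ∈ Finset.range N, c k * (((k:ℝ)+1) ^ (1/p) - (k:ℝ) ^ (1/p)) := by
        rw [step2, habel]
    _ ≤ C * (Bp + p⁻¹ * (Real.log (N:ℝ)) ^ (1/p') * Bp) :=
        mul_le_mul_of_nonneg_left hsplit hC.le
    _ = C * (1 + p⁻¹ * (Real.log (N:ℝ)) ^ (1/p')) * Bp := by ring


/-- Restricted-type bounds upgrade to strong-type bounds with a logarithmic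
loss (Lemma 3.1). -/
theorem restricted_implies_strong (p p' C : ℝ) (hp : 1 < p) (hpp' : 1 / p + 1 / p' = 1)
    (hC : 0 < C) (N : ℕ) (hN : 1 ≤ N) (T : (Fin N → ℂ) → ℝ)
    (hTnn : ∀ a, 0 ≤ T a)
    (hTsub : ∀ a b, T (a + b) ≤ T a + T b)
    (hThom : ∀ (l : ℂ) (a : Fin N → ℂ), T (l • a) = ‖l‖ * T a)
    (hTres : ∀ S : Finset (Fin N),
      T (fun j => if j ∈ S then 1 else 0) ≤
        C * (∑ j, ‖(if j ∈ S then (1 : ℂ) else 0)‖ ^ p) ^ (1 / p)) :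
    ∀ a : Fin N → ℂ,
      T a ≤ 2 ^ (1 / p) * 4 ^ (1 / p') * C * (1 + p⁻¹ * (Real.log N) ^ (1 / p')) *
        (∑ j, ‖a j‖ ^ p) ^ (1 / p) := by
  intro a
  classical
  have hp0 : (0:ℝ) < p := lt_trans one_pos hp
  have hip : 0 < 1/p := by positivity
  have hip1 : 1/p < 1 := by rw [div_lt_one hp0]; exact hp
  have hip' : 1/p' = 1 - 1/p := by linarith
  have hip'0 : 0 < 1/p' := by rw [hip']; linarith
  set K := C * (1 + p⁻¹ * (Real.log N) ^ (1/p')) with hK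
  have hlognn : 0 ≤ (Real.log N) ^ (1/p') :=
    Real.rpow_nonneg (Real.log_nonneg (by exact_mod_cast hN)) _
  have hK0 : 0 ≤ K := by
    have h1 : 0 ≤ p⁻¹ * (Real.log N) ^ (1/p') := mul_nonneg (by positivity) hlognn
    have h2 : 0 ≤ 1 + p⁻¹ * (Real.log N) ^ (1/p') := by linarith
    exact mul_nonneg hC.le h2
  have hrpinv : ∀ x : ℝ, 0 ≤ x → (x ^ (1/p)) ^ p = x := by
    intro x hx
    rw [← Real.rpow_mul hx, one_div, inv_mul_cancel₀ (ne_of_gt hp0), Real.rpow_one]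
  -- two-term Hölder
  have h2H : ∀ u v : ℝ, 0 ≤ u → 0 ≤ v → u + v ≤ 2 ^ (1/p') * (u^p + v^p) ^ (1/p) := by
    intro u v hu hv
    have H := Real.inner_le_Lp_mul_Lq_of_nonneg (p := p) (q := p')
      (Finset.univ : Finset (Fin 2)) (f := ![u, v]) (g := ![1, 1])
      ⟨by rw [inv_one, inv_eq_one_div, inv_eq_one_div]; exact hpp', hp0, one_div_pos.mp hip'0⟩
      (fun i _ => by fin_cases i <;> simpa)
      (fun i _ => by fin_cases i <;> norm_num)
    rw [Fin.sum_univ_two, Fin.sum_univ_two, Fin.sum_univ_two] at H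
    simp only [Matrix.cons_val_zero, Matrix.cons_val_one, Matrix.head_cons, mul_one,
      Real.one_rpow] at H
    calc u + v ≤ (u ^ p + v ^ p) ^ (1/p) * ((1:ℝ) + 1) ^ (1/p') := H
      _ = 2 ^ (1/p') * (u^p + v^p) ^ (1/p) := by norm_num [mul_comm]
  -- signed real vectors
  have hreal : ∀ r : Fin N → ℝ, T (fun j => (r j : ℂ)) ≤
      K * (2 ^ (1/p') * (∑ j, |r j| ^ p) ^ (1/p)) := by
    intro r
    set rp : Fin N → ℝ := fun j => max (r j) 0 with hrpdef
    set rn : Fin N → ℝ := fun j => max (-r j) 0 with hrndef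
    have hrp : ∀ j, 0 ≤ rp j := fun j => le_max_right _ _
    have hrn : ∀ j, 0 ≤ rn j := fun j => le_max_right _ _
    have hsplit : (fun j => (r j : ℂ))
        = (fun j => (rp j : ℂ)) + ((-1 : ℂ) • fun j => (rn j : ℂ)) := by
      funext j
      simp only [Pi.add_apply, Pi.smul_apply, smul_eq_mul]
      have h := max_zero_sub_max_neg_zero_eq_self (r j)
      have : r j = rp j - rn j := by rw [hrpdef, hrndef]; exact h.symm
      rw [this]
      push_cast
      ring
    have h1 := nonneg_case p p' C hp hpp' hC N hN T hTnn hTsub hThom hTres rp hrp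
    have h2 := nonneg_case p p' C hp hpp' hC N hN T hTnn hTsub hThom hTres rn hrn
    have hpt : ∀ j, rp j ^ p + rn j ^ p = |r j| ^ p := by
      intro j
      rcases le_total 0 (r j) with h | h
      · have e1 : rp j = r j := max_eq_left h
        have e2 : rn j = 0 := max_eq_right (neg_nonpos.2 h)
        rw [e1, e2, Real.zero_rpow (ne_of_gt hp0), add_zero, abs_of_nonneg h]
      · have e1 : rp j = 0 := max_eq_right h
        have e2 : rn j = -r j := max_eq_left (neg_nonneg.2 h)
        rw [e1, e2, Real.zero_rpow (ne_of_gt hp0), zero_add, abs_of_nonpos h]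
    set U := (∑ j, rp j ^ p) ^ (1/p) with hU
    set V := (∑ j, rn j ^ p) ^ (1/p) with hV
    have hUnn : 0 ≤ U := Real.rpow_nonneg
      (Finset.sum_nonneg (fun j _ => Real.rpow_nonneg (hrp j) _)) _
    have hVnn : 0 ≤ V := Real.rpow_nonneg
      (Finset.sum_nonneg (fun j _ => Real.rpow_nonneg (hrn j) _)) _
    have hUV : U ^ p + V ^ p = ∑ j, |r j| ^ p := by
      rw [hU, hV, hrpinv _ (Finset.sum_nonneg (fun j _ => Real.rpow_nonneg (hrp j) _)),
        hrpinv _ (Finset.sum_nonneg (fun j _ => Real.rpow_nonneg (hrn j) _)),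
        ← Finset.sum_add_distrib]
      exact Finset.sum_congr rfl (fun j _ => hpt j)
    calc T (fun j => (r j : ℂ))
        ≤ T (fun j => (rp j : ℂ)) + T ((-1 : ℂ) • fun j => (rn j : ℂ)) := by
          rw [hsplit]; exact hTsub _ _
      _ = T (fun j => (rp j : ℂ)) + T (fun j => (rn j : ℂ)) := by
          rw [hThom]; norm_num
      _ ≤ K * U + K * V := add_le_add h1 h2
      _ = K * (U + V) := by ring
      _ ≤ K * (2 ^ (1/p') * (U ^ p + V ^ p) ^ (1/p)) :=
          mul_le_mul_of_nonneg_left (h2H U V hUnn hVnn) hK0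
      _ = K * (2 ^ (1/p') * (∑ j, |r j| ^ p) ^ (1/p)) := by rw [hUV]
  -- complex case
  set X : Fin N → ℝ := fun j => (a j).re with hX
  set Y : Fin N → ℝ := fun j => (a j).im with hY
  have hdecompa : a = (fun j => (X j : ℂ)) + Complex.I • (fun j => (Y j : ℂ)) := by
    funext j
    simp only [Pi.add_apply, Pi.smul_apply, smul_eq_mul, hX, hY]
    rw [mul_comm]
    exact (Complex.re_add_im (a j)).symm
  have hTa : T a ≤ T (fun j => (X j : ℂ)) + T (fun j => (Y j : ℂ)) := by
    conv_lhs => rw [hdecompa]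
    refine le_trans (hTsub _ _) ?_
    rw [hThom]
    simp [Complex.norm_I]
  set Sa := ∑ j, ‖a j‖ ^ p with hSa
  have hSann : 0 ≤ Sa :=
    Finset.sum_nonneg (fun j _ => Real.rpow_nonneg (norm_nonneg _) _)
  set RX := (∑ j, |X j| ^ p) ^ (1/p) with hRX
  set RY := (∑ j, |Y j| ^ p) ^ (1/p) with hRY
  have hRXnn : 0 ≤ RX := Real.rpow_nonneg
    (Finset.sum_nonneg (fun j _ => Real.rpow_nonneg (abs_nonneg _) _)) _
  have hRYnn : 0 ≤ RY := Real.rpow_nonneg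
    (Finset.sum_nonneg (fun j _ => Real.rpow_nonneg (abs_nonneg _) _)) _
  have hXY : RX ^ p + RY ^ p ≤ 2 * Sa := by
    rw [hRX, hRY,
      hrpinv _ (Finset.sum_nonneg (fun j _ => Real.rpow_nonneg (abs_nonneg _) _)),
      hrpinv _ (Finset.sum_nonneg (fun j _ => Real.rpow_nonneg (abs_nonneg _) _)),
      hSa, ← Finset.sum_add_distrib, Finset.mul_sum]
    refine Finset.sum_le_sum (fun j _ => ?_)
    have e1 : |X j| ≤ ‖a j‖ := by
      rw [hX]; simpa using Complex.abs_re_le_norm (a j)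
    have e2 : |Y j| ≤ ‖a j‖ := by
      rw [hY]; simpa using Complex.abs_im_le_norm (a j)
    have f1 : |X j| ^ p ≤ ‖a j‖ ^ p := Real.rpow_le_rpow (abs_nonneg _) e1 hp0.le
    have f2 : |Y j| ^ p ≤ ‖a j‖ ^ p := Real.rpow_le_rpow (abs_nonneg _) e2 hp0.le
    linarith
  have h4 : (4:ℝ) ^ (1/p') = 2 ^ (1/p') * 2 ^ (1/p') := by
    rw [show (4:ℝ) = 2*2 by norm_num, Real.mul_rpow (by norm_num) (by norm_num)]
  have hfinal : RX + RY ≤ 2 ^ (1/p') * (2 ^ (1/p) * Sa ^ (1/p)) := by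
    refine le_trans (h2H RX RY hRXnn hRYnn) ?_
    rw [← Real.mul_rpow (by norm_num) hSann]
    refine mul_le_mul_of_nonneg_left ?_ (Real.rpow_nonneg (by norm_num) _)
    exact Real.rpow_le_rpow (by positivity) hXY hip.le
  calc T a ≤ T (fun j => (X j : ℂ)) + T (fun j => (Y j : ℂ)) := hTa
    _ ≤ K * (2 ^ (1/p') * RX) + K * (2 ^ (1/p') * RY) := add_le_add (hreal X) (hreal Y)
    _ = (K * 2 ^ (1/p')) * (RX + RY) := by ring
    _ ≤ (K * 2 ^ (1/p')) * (2 ^ (1/p') * (2 ^ (1/p) * Sa ^ (1/p))) :=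
        mul_le_mul_of_nonneg_left hfinal
          (mul_nonneg hK0 (Real.rpow_nonneg (by norm_num) _))
    _ = 2 ^ (1/p) * 4 ^ (1/p') * C * (1 + p⁻¹ * (Real.log N) ^ (1/p')) * Sa ^ (1/p) := by
        rw [h4, hK]; ring
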